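/- Move commutes with Conv at the moved location: for i ≠ j, applying Move[i, j] then Conv[i, t] yields the same document as applying Conv[j, t] then Move[i, j]. -/
import Mathlib


/-- Atomic types of document components. -/
inductive Ty where
  | num | str | bool | del
deriving DecidableEq, Repr

/-- A document is a tuple (list) of atomic types. -/
abbrev Doc := List Ty

/-- Edit operations (1-based indices). `ins i t p` inserts type `t` at index `i`
    (with unique identifier `p`), shifting indices ≥ i right; `conv i t` sets the
    type at index `i` to `t`; `move i j` sets index `i` to the type at index `j`
    and sets index `j` to the tombstone `del`. -/
inductive Edit where
  | id
  | ins (i : ℕ) (t : Ty) (p : ℕ)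
  | conv (i : ℕ) (t : Ty)
  | move (i j : ℕ)
deriving DecidableEq, Repr

/-- Partial action of an edit on a document (1-based indices). -/
def Edit.apply : Edit → Doc → Option Doc
  | .id, d => some d
  | .ins i t _, d =>
      if 1 ≤ i ∧ i ≤ d.length + 1 then
        some (d.take (i-1) ++ t :: d.drop (i-1))
      else none
  | .conv i t, d =>
      if 1 ≤ i ∧ i ≤ d.length then some (d.set (i-1) t) else none
  | .move i j, d =>
      if 1 ≤ i ∧ i ≤ d.length ∧ 1 ≤ j ∧ j ≤ d.length ∧ i ≠ j then
        some ((d.set (i-1) (d.getD (j-1) .del)).set (j-1) .del)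
      else none

/-- for `i ≠ j`, applying `Move[i,j]` then `Conv[i,t]` yields the same
document as applying `Conv[j,t]` then `Move[i,j]`. -/
theorem move_conv_source (i j : ℕ) (t : Ty) (hij : i ≠ j)
    (d r₁ r₂ : Doc)
    (h₁ : ((Edit.move i j).apply d >>= (Edit.conv i t).apply) = some r₁)
    (h₂ : ((Edit.conv j t).apply d >>= (Edit.move i j).apply) = some r₂) :
    r₁ = r₂ := by
  simp only [Edit.apply] at h₁ h₂
  split at h₁
  · case _ h =>
    obtain ⟨hi1, hi, hj1, hj, _⟩ := h
    rw [if_pos ⟨hj1, hj⟩] at h₂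
    simp only [Option.bind_eq_bind, Option.bind_some, Edit.apply] at h₁ h₂
    rw [if_pos ⟨hi1, by simpa using hi⟩] at h₁
    rw [if_pos ⟨hi1, by simpa using hi, hj1, by simpa using hj, hij⟩] at h₂
    obtain rfl := Option.some_injective _ h₁
    obtain rfl := Option.some_injective _ h₂
    have hjlt : j - 1 < d.length := by omega
    have hne : i - 1 ≠ j - 1 := by omega
    have hy : (d.set (j-1) t).getD (j-1) Ty.del = t := by
      simp [List.getD_eq_getElem?_getD, List.getElem?_set, hjlt]
    rw [hy]
    apply List.ext_getElem (by simp)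
    intro n hn hn'
    simp only [List.getElem_set]
    split_ifs <;> first | rfl | (exfalso; omega)
  · simp at h₁
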